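/- Peel's theorem: with X a subset of column k of T, Y a subset of column k+1, and |X∪Y| greater than the length of column k, the set B = S_{X∪Y}·C(T) ⊆ Σ_r is a disjoint union of pairs {π, π·α_π} where α_π ∈ R(T) is a transposition. -/

import Mathlib

open Finset TensorProduct
open scoped Classical

noncomputable section

namespace Schur

variable {X : Type*}

/-- Parity of the even symbols `0,...,m-1` is `0`, of the odd symbols `m,...,m+n-1` is `1`. -/
def degp (m n : ℕ) : Fin (m + n) → ℕ := fun x => if x.val < m then 0 else 1

/-- Supercommutativity relations for the generators `c_{uv}` of `A(m|n)`. -/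
def Rel (K : Type*) [CommRing K] (par : X → ℕ) :
    FreeAlgebra K (X × X) → FreeAlgebra K (X × X) → Prop := fun a b =>
  ∃ u v : X × X,
    a = FreeAlgebra.ι K u * FreeAlgebra.ι K v ∧
    b = ((-1 : K) ^ ((par u.1 + par u.2) * (par v.1 + par v.2))) •
        (FreeAlgebra.ι K v * FreeAlgebra.ι K u)

/-- The supersymmetric bialgebra `A(m|n)` (as an algebra). -/
abbrev A (K : Type*) [CommRing K] (par : X → ℕ) := RingQuot (Rel K par)

/-- The generator `c_{uv}`. -/
def gen (K : Type*) [CommRing K] (par : X → ℕ) (u v : X) : A K par :=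
  RingQuot.mkAlgHom K (Rel K par) (FreeAlgebra.ι K (u, v))

variable (r : ℕ)

/-- The sign relating `χ_{i,j}` to the ordered monomial `c_{i_1 j_1} ⋯ c_{i_r j_r}`. -/
def chiSign (par : X → ℕ) (i j : Fin r → X) : ℤ :=
  (-1) ^ (∑ t : Fin r, par (i t) *
    ∑ s ∈ univ.filter (fun s => t < s), (par (i s) + par (j s)))

/-- The signed monomial `χ_{i,j}` in `A(m|n,r)`. -/
def chi (K : Type*) [CommRing K] (par : X → ℕ) (i j : Fin r → X) : A K par :=
  chiSign r par i j • ((List.finRange r).map (fun t => gen K par (i t) (j t))).prod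

/-- The sign `(-1)^{s(j,π)}` of the `*`-action: it counts inversions of `π` among
odd entries of `j`. -/
def starSign (par : X → ℕ) (j : Fin r → X) (π : Equiv.Perm (Fin r)) : ℤ :=
  (-1) ^ (univ.filter (fun p : Fin r × Fin r =>
      p.1 < p.2 ∧ π p.2 < π p.1 ∧ par (j p.1) ≠ 0 ∧ par (j p.2) ≠ 0)).card

/-- A basic tableau: a partition shape `lam` together with a bijective labelling of
its cells `(row, col)` by `{1,...,r}`. -/
structure BasicTableau (r : ℕ) where
  lam : ℕ → ℕ
  antitone : ∀ a b : ℕ, a ≤ b → lam b ≤ lam a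
  pos : Fin r → ℕ × ℕ
  mem : ∀ t, (pos t).2 < lam (pos t).1
  inj : Function.Injective pos
  surj : ∀ c : ℕ × ℕ, c.2 < lam c.1 → ∃ t, pos t = c

/-- The row stabilizer `R(T)`. -/
def rowStab (T : BasicTableau r) : Finset (Equiv.Perm (Fin r)) :=
  univ.filter (fun σ => ∀ t, (T.pos (σ t)).1 = (T.pos t).1)

/-- The column stabilizer `C(T)`. -/
def colStab (T : BasicTableau r) : Finset (Equiv.Perm (Fin r)) :=
  univ.filter (fun σ => ∀ t, (T.pos (σ t)).2 = (T.pos t).2)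

/-- The symmetrizer `T[i:j] = Σ_{ρ∈R(T)} Σ_{κ∈C(T)} sgn(κ) χ_{i*ρ, j*κ}`. -/
def symmA (K : Type*) [CommRing K] (par : X → ℕ) (T : BasicTableau r)
    (i j : Fin r → X) : A K par :=
  ∑ ρ ∈ rowStab r T, ∑ κ ∈ colStab r T,
    ((Equiv.Perm.sign κ : ℤ) * starSign r par i ρ * starSign r par j κ) •
      chi r K par (i ∘ ρ) (j ∘ κ)

/-- The symmetrizer in the form `T[i:j] = Σ_{ρ∈R(T)} Σ_{κ∈C(T)} sgn(κ) χ_{i, j*κ*ρ}`. -/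
def symmB (K : Type*) [CommRing K] (par : X → ℕ) (T : BasicTableau r)
    (i j : Fin r → X) : A K par :=
  ∑ ρ ∈ rowStab r T, ∑ κ ∈ colStab r T,
    ((Equiv.Perm.sign κ : ℤ) * starSign r par j κ * starSign r par (j ∘ κ) ρ) •
      chi r K par i (j ∘ κ ∘ ρ)

/-- The symmetrizer in the form `T[i:j] = Σ_{κ∈C(T)} Σ_{ρ∈R(T)} sgn(κ) χ_{i*ρ*κ, j}`. -/
def symmC (K : Type*) [CommRing K] (par : X → ℕ) (T : BasicTableau r)
    (i j : Fin r → X) : A K par :=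
  ∑ κ ∈ colStab r T, ∑ ρ ∈ rowStab r T,
    ((Equiv.Perm.sign κ : ℤ) * starSign r par i ρ * starSign r par (i ∘ ρ) κ) •
      chi r K par (i ∘ ρ ∘ κ) j

/-- Semistandardness (in the super sense) of the filling `j` of the tableau `T`. -/
def Semistandard [LinearOrder X] (par : X → ℕ) (T : BasicTableau r)
    (j : Fin r → X) : Prop :=
  (∀ t s, (T.pos t).1 = (T.pos s).1 → (T.pos t).2 ≤ (T.pos s).2 → j t ≤ j s) ∧
  (∀ t s, (T.pos t).2 = (T.pos s).2 → (T.pos t).1 ≤ (T.pos s).1 → j t ≤ j s) ∧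
  (∀ t s, t ≠ s → (T.pos t).2 = (T.pos s).2 → par (j t) = 0 → j t ≠ j s) ∧
  (∀ t s, t ≠ s → (T.pos t).1 = (T.pos s).1 → par (j t) ≠ 0 → j t ≠ j s)

/-- `r_{qp}`: the number of entries `≤ p` in the first `q` rows. -/
def rCount [LinearOrder X] (T : BasicTableau r) (j : Fin r → X) (q : ℕ) (p : X) : ℕ :=
  (univ.filter (fun t => (T.pos t).1 < q ∧ j t ≤ p)).card

/-- `c_{qp}`: the number of entries `≤ p` in the first `q` columns. -/
def cCount [LinearOrder X] (T : BasicTableau r) (j : Fin r → X) (q : ℕ) (p : X) : ℕ :=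
  (univ.filter (fun t => (T.pos t).2 < q ∧ j t ≤ p)).card

/-- Row dominance preorder `T_l ⊴_r T_j`: `(r_{qp}(l)) ≤_lex (r_{qp}(j))`,
listing first by `q`, then by `p`. -/
def rowDom [LinearOrder X] (T : BasicTableau r) (l j : Fin r → X) : Prop :=
  (∀ q p, rCount r T l q p = rCount r T j q p) ∨
  ∃ (q : ℕ) (p : X), rCount r T l q p < rCount r T j q p ∧
    ∀ (q' : ℕ) (p' : X), (q' < q ∨ (q' = q ∧ p' < p)) →
      rCount r T l q' p' = rCount r T j q' p'

/-- Column dominance preorder `T_k ⊴_c T_i`: `(c_{qp}(k)) ≤_lex (c_{qp}(i))`. -/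
def colDom [LinearOrder X] (T : BasicTableau r) (k i : Fin r → X) : Prop :=
  (∀ q p, cCount r T k q p = cCount r T i q p) ∨
  ∃ (q : ℕ) (p : X), cCount r T k q p < cCount r T i q p ∧
    ∀ (q' : ℕ) (p' : X), (q' < q ∨ (q' = q ∧ p' < p)) →
      cCount r T k q' p' = cCount r T i q' p'

/-- `σ` moves only points of `Z`; i.e. `σ ∈ S_Z`. -/
def fixesOutside (Z : Finset (Fin r)) (σ : Equiv.Perm (Fin r)) : Prop :=
  ∀ t, t ∉ Z → σ t = t

/-- Membership in the subgroup `S_X × S_Y` of `S_{X∪Y}`. -/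
def prodSub (Xs Ys : Finset (Fin r)) (σ : Equiv.Perm (Fin r)) : Prop :=
  (∀ t ∈ Xs, σ t ∈ Xs) ∧ (∀ t ∈ Ys, σ t ∈ Ys) ∧ fixesOutside r (Xs ∪ Ys) σ

/-- Two fillings have the same content. -/
def sameContent (i j : Fin r → X) : Prop :=
  ∀ v : X, (univ.filter (fun t => i t = v)).card = (univ.filter (fun t => j t = v)).card

/-- `f < g` in the column lexicographic order: at the first cell (reading column by
column, each column top to bottom) where they differ, `f` is smaller. -/
def colLexLt [LinearOrder X] (T : BasicTableau r) (f g : Fin r → X) : Prop :=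
  ∃ t, f t < g t ∧ ∀ s,
    ((T.pos s).2 < (T.pos t).2 ∨ ((T.pos s).2 = (T.pos t).2 ∧ (T.pos s).1 < (T.pos t).1)) →
    f s = g s

/-- `r(T_i)`: product of factorials of row multiplicities of even symbols. -/
def rFact [Fintype X] (par : X → ℕ) (T : BasicTableau r) (i : Fin r → X) : ℕ :=
  ∏ a : X, ∏ q ∈ Finset.range r,
    if par a = 0 then
      Nat.factorial (univ.filter (fun t => i t = a ∧ (T.pos t).1 = q)).card
    else 1

/-- `c(T_j)`: product of factorials of column multiplicities of odd symbols. -/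
def cFact [Fintype X] (par : X → ℕ) (T : BasicTableau r) (j : Fin r → X) : ℕ :=
  ∏ a : X, ∏ q ∈ Finset.range r,
    if par a ≠ 0 then
      Nat.factorial (univ.filter (fun t => j t = a ∧ (T.pos t).2 = q)).card
    else 1

/-- The modified symmetrizer `T{i:j} = T[i:j]/(r(T_i)c(T_j))` over `ℚ`. -/
def modSymm (m n : ℕ) (T : BasicTableau r) (i j : Fin r → Fin (m + n)) :
    A ℚ (degp m n) :=
  (((rFact r (degp m n) T i * cFact r (degp m n) T j : ℕ) : ℚ))⁻¹ •
    symmA r ℚ (degp m n) T i j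



/-- Auxiliary: canonical swap attached to a subset `s` of cells: a swap of two
distinct elements of `s` lying in the same row, if such a pair exists. -/
def gswap (n : ℕ) (T : BasicTableau n) (s : Finset (Fin n)) : Equiv.Perm (Fin n) :=
  if h : ∃ p : Fin n × Fin n,
      p.1 ≠ p.2 ∧ p.1 ∈ s ∧ p.2 ∈ s ∧ (T.pos p.1).1 = (T.pos p.2).1
  then Equiv.swap h.choose.1 h.choose.2 else 1

lemma gswap_spec (n : ℕ) (T : BasicTableau n) (s : Finset (Fin n))
    (h : ∃ p : Fin n × Fin n,
      p.1 ≠ p.2 ∧ p.1 ∈ s ∧ p.2 ∈ s ∧ (T.pos p.1).1 = (T.pos p.2).1) :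
    gswap n T s = Equiv.swap h.choose.1 h.choose.2 :=
  dif_pos h

/-- Peel's theorem: with `X` in column `k`, `Y` in column `k+1` and
`|X∪Y|` exceeding the length of column `k`, the set `B = S_{X∪Y}·C(T)` is a disjoint
union of pairs `{π, π·α_π}` with `α_π ∈ R(T)` a transposition. -/
theorem stmt6 (r k : ℕ) (T : BasicTableau r) (Xs Ys : Finset (Fin r))
    (hX : ∀ t ∈ Xs, (T.pos t).2 = k) (hY : ∀ t ∈ Ys, (T.pos t).2 = k + 1)
    (hcard : (univ.filter (fun t => (T.pos t).2 = k)).card < (Xs ∪ Ys).card) :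
    ∃ α : Equiv.Perm (Fin r) → Equiv.Perm (Fin r),
      ∀ π ∈ {π : Equiv.Perm (Fin r) |
          ∃ σ κ, fixesOutside r (Xs ∪ Ys) σ ∧ κ ∈ colStab r T ∧ π = σ * κ},
        (α π).IsSwap ∧ α π ∈ rowStab r T ∧ π * α π ≠ π ∧
        (π * α π) ∈ {π : Equiv.Perm (Fin r) |
          ∃ σ κ, fixesOutside r (Xs ∪ Ys) σ ∧ κ ∈ colStab r T ∧ π = σ * κ} ∧
        α (π * α π) = α π := by
  classical
  set Z := Xs ∪ Ys with hZdef
  let Sset : Equiv.Perm (Fin r) → Finset (Fin r) :=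
    fun π => univ.filter (fun t => π t ∈ Z)
  refine ⟨fun π => gswap r T (Sset π), ?_⟩
  rintro π ⟨σ, κ, hσ, hκ, rfl⟩
  have hκcol : ∀ t, (T.pos (κ t)).2 = (T.pos t).2 := (mem_filter.mp hκ).2
  have hσZ : ∀ z ∈ Z, σ.symm z ∈ Z := by
    intro z hz
    by_contra hc
    have h1 := hσ _ hc
    rw [Equiv.apply_symm_apply] at h1
    rw [← h1] at hc
    exact hc hz
  -- cardinality of Sset (σ * κ)
  have hcardS : (Sset (σ * κ)).card = Z.card := by
    apply Finset.card_bij (fun t _ => (σ * κ) t)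
    · intro a ha; exact (mem_filter.mp ha).2
    · intro a ha b hb hab; exact (σ * κ).injective hab
    · intro b hb
      refine ⟨(σ * κ).symm b, mem_filter.mpr ⟨mem_univ _, ?_⟩, by simp⟩
      simpa using hb
  -- the rows of column k
  set Rset : Finset ℕ :=
    (univ.filter (fun t => (T.pos t).2 = k)).image (fun t => (T.pos t).1) with hRdef
  have hcardR : Rset.card = (univ.filter (fun t => (T.pos t).2 = k)).card := by
    apply Finset.card_image_of_injOn
    intro a ha b hb hab
    apply T.inj
    exact Prod.ext hab (by rw [(mem_filter.mp ha).2, (mem_filter.mp hb).2])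
  have hmaps : ∀ t ∈ Sset (σ * κ), (T.pos t).1 ∈ Rset := by
    intro t ht
    have hz : σ (κ t) ∈ Z := by
      have := (mem_filter.mp ht).2
      rwa [Equiv.Perm.mul_apply] at this
    have hw : κ t ∈ Z := by
      have := hσZ _ hz
      rwa [Equiv.symm_apply_apply] at this
    have hk : k ≤ (T.pos t).2 := by
      rcases mem_union.mp hw with h | h
      · rw [← hκcol t, hX _ h]
      · rw [← hκcol t, hY _ h]; omega
    have hlt : k < T.lam (T.pos t).1 := lt_of_le_of_lt hk (T.mem t)
    obtain ⟨s, hs⟩ := T.surj ((T.pos t).1, k) hlt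
    exact mem_image.mpr ⟨s, mem_filter.mpr ⟨mem_univ _, by rw [hs]⟩, by rw [hs]⟩
  have hlt' : Rset.card < (Sset (σ * κ)).card := by
    rw [hcardR, hcardS]; exact hcard
  obtain ⟨u, hu, v, hv, huv, hrowuv⟩ :=
    Finset.exists_ne_map_eq_of_card_lt_of_maps_to hlt' hmaps
  have hgood : ∃ p : Fin r × Fin r,
      p.1 ≠ p.2 ∧ p.1 ∈ Sset (σ * κ) ∧ p.2 ∈ Sset (σ * κ) ∧
        (T.pos p.1).1 = (T.pos p.2).1 :=
    ⟨(u, v), huv, hu, hv, hrowuv⟩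
  obtain ⟨hne, hu', hv', hrow'⟩ := hgood.choose_spec
  set a := hgood.choose.1
  set b := hgood.choose.2
  have hα : gswap r T (Sset (σ * κ)) = Equiv.swap a b := gswap_spec r T _ hgood
  have haZ : (σ * κ) a ∈ Z := (mem_filter.mp hu').2
  have hbZ : (σ * κ) b ∈ Z := (mem_filter.mp hv').2
  have hSeq : Sset ((σ * κ) * Equiv.swap a b) = Sset (σ * κ) := by
    ext t
    simp only [Sset, mem_filter, mem_univ, true_and]
    simp only [Equiv.Perm.mul_apply]
    rcases eq_or_ne t a with rfl | h1
    · rw [Equiv.swap_apply_left]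
      rw [Equiv.Perm.mul_apply] at haZ hbZ
      constructor <;> intro _ <;> assumption
    rcases eq_or_ne t b with rfl | h2
    · rw [Equiv.swap_apply_right]
      rw [Equiv.Perm.mul_apply] at haZ hbZ
      constructor <;> intro _ <;> assumption
    · rw [Equiv.swap_apply_of_ne_of_ne h1 h2]
  simp only [hα]
  refine ⟨⟨a, b, hne, rfl⟩, ?_, ?_, ?_, ?_⟩
  · -- row stabilizer
    refine mem_filter.mpr ⟨mem_univ _, fun t => ?_⟩
    rcases eq_or_ne t a with rfl | h1
    · rw [Equiv.swap_apply_left, ← hrow']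
    rcases eq_or_ne t b with rfl | h2
    · rw [Equiv.swap_apply_right, hrow']
    · rw [Equiv.swap_apply_of_ne_of_ne h1 h2]
  · -- nontriviality
    intro h
    have h2 : (σ * κ) (Equiv.swap a b a) = (σ * κ) a := by
      rw [← Equiv.Perm.mul_apply, h]
    rw [Equiv.swap_apply_left] at h2
    exact hne ((σ * κ).injective h2).symm
  · -- membership of π * α π in B
    refine ⟨Equiv.swap ((σ * κ) a) ((σ * κ) b) * σ, κ, ?_, hκ, ?_⟩
    · intro t ht
      have hσt := hσ t ht
      have h1 : t ≠ (σ * κ) a := fun h => ht (h ▸ haZ)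
      have h2 : t ≠ (σ * κ) b := fun h => ht (h ▸ hbZ)
      rw [Equiv.Perm.mul_apply] at h1 h2
      simp only [Equiv.Perm.mul_apply, hσt, Equiv.swap_apply_of_ne_of_ne h1 h2]
    · rw [mul_assoc, Equiv.mul_swap_eq_swap_mul κ, ← mul_assoc,
        Equiv.mul_swap_eq_swap_mul σ]
      rfl
  · -- consistency of the pairing
    show gswap r T (Sset ((σ * κ) * Equiv.swap a b)) = Equiv.swap a b
    rw [hSeq, hα]


end Schur
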